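/- Suppose m = n (full cliques). Then for almost every initial vector x(0) ∈ [0,1]^n with respect to n-dimensional Lebesgue measure, every node state converges: for each i ∈ {1,…,n} the limit lim_{t→∞} x_i(t) exists in ℝ. -/

import Mathlib

open Filter MeasureTheory

/-- Average of a vector of `n` opinions. -/
noncomputable def cliqueAvg (n : ℕ) (x : Fin n → ℝ) : ℝ := (∑ j, x j) / (n : ℝ)

/-- Full-clique (`m = n`) bounded-confidence opinion dynamics with mixing parameter `δ`
and confidence level `η`, started from `x0`. -/
noncomputable def fcTraj (n : ℕ) (δ η : ℝ) (x0 : Fin n → ℝ) : ℕ → Fin n → ℝ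
  | 0 => x0
  | t + 1 => fun i =>
      if |fcTraj n δ η x0 t i - cliqueAvg n (fcTraj n δ η x0 t)| ≤ η then
        (1 - δ) * fcTraj n δ η x0 t i + δ * cliqueAvg n (fcTraj n δ η x0 t)
      else fcTraj n δ η x0 t i

open Finset in
lemma aux_affine (ρ c : ℝ) (hρ : |ρ| < 1) (u : ℕ → ℝ)
    (h : ∀ k, u (k + 1) = ρ * u k + c) :
    Tendsto u atTop (nhds (c / (1 - ρ))) := by
  have hne : (1 : ℝ) - ρ ≠ 0 := by
    intro h0
    rw [sub_eq_zero] at h0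
    rw [← h0] at hρ
    simp at hρ
  have key : ∀ k, u k = c / (1 - ρ) + ρ ^ k * (u 0 - c / (1 - ρ)) := by
    intro k
    induction k with
    | zero => simp
    | succ k ih =>
      rw [h k, ih]
      field_simp
      ring
  have : Tendsto (fun k => c / (1 - ρ) + ρ ^ k * (u 0 - c / (1 - ρ))) atTop
      (nhds (c / (1 - ρ) + 0 * (u 0 - c / (1 - ρ)))) :=
    tendsto_const_nhds.add ((tendsto_pow_atTop_nhds_zero_of_abs_lt_one hρ).mul_const _)
  simp only [zero_mul, add_zero] at this
  exact this.congr fun k => (key k).symm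

lemma aux_smoothing (δ : ℝ) (hδ0 : 0 < δ) (hδ1 : δ < 1) (u v : ℕ → ℝ) (L : ℝ)
    (hv : Tendsto v atTop (nhds L))
    (h : ∀ t, u (t + 1) = (1 - δ) * u t + δ * v t) :
    Tendsto u atTop (nhds L) := by
  rw [Metric.tendsto_atTop]
  intro ε hε
  obtain ⟨T, hT⟩ := (Metric.tendsto_atTop.1 hv) (ε / 4) (by linarith)
  have hd0 : (0:ℝ) ≤ 1 - δ := by linarith
  have hd1 : (1:ℝ) - δ < 1 := by linarith
  have key : ∀ k, |u (T + k) - L| ≤ (1 - δ) ^ k * |u T - L| + ε / 4 := by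
    intro k
    induction k with
    | zero => simp; linarith
    | succ k ih =>
      have hrec := h (T + k)
      have hv' : |v (T + k) - L| < ε / 4 := by
        simpa [Real.dist_eq] using hT (T + k) (Nat.le_add_right _ _)
      have heq : u (T + (k + 1)) - L = (1 - δ) * (u (T + k) - L) + δ * (v (T + k) - L) := by
        rw [show T + (k + 1) = (T + k) + 1 by ring, hrec]; ring
      have step1 : |u (T + (k + 1)) - L| ≤ (1 - δ) * |u (T + k) - L| + δ * |v (T + k) - L| := by
        rw [heq]
        refine (abs_add_le _ _).trans ?_
        rw [abs_mul, abs_mul, abs_of_nonneg hd0, abs_of_nonneg hδ0.le]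
      have h1 : (1 - δ) * |u (T + k) - L| ≤ (1 - δ) * ((1 - δ) ^ k * |u T - L| + ε / 4) :=
        mul_le_mul_of_nonneg_left ih hd0
      have h2 : δ * |v (T + k) - L| ≤ δ * (ε / 4) :=
        mul_le_mul_of_nonneg_left hv'.le hδ0.le
      have h3 : (1 - δ) * ((1 - δ) ^ k * |u T - L|) = (1 - δ) ^ (k + 1) * |u T - L| := by ring
      nlinarith [abs_nonneg (u T - L)]
  have hpow : Tendsto (fun k => (1 - δ) ^ k * |u T - L|) atTop (nhds 0) := by
    simpa using (tendsto_pow_atTop_nhds_zero_of_abs_lt_one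
      (by rw [abs_of_nonneg hd0]; exact hd1)).mul_const |u T - L|
  obtain ⟨k₀, hk₀⟩ := (Metric.tendsto_atTop.1 hpow) (ε / 4) (by linarith)
  refine ⟨T + k₀, fun t ht => ?_⟩
  obtain ⟨k, rfl⟩ := Nat.exists_eq_add_of_le ht
  have hk : k₀ ≤ k₀ + k := Nat.le_add_right _ _
  have h1 := key (k₀ + k)
  have h2 : (1 - δ) ^ (k₀ + k) * |u T - L| < ε / 4 := by
    have := hk₀ (k₀ + k) hk
    rw [Real.dist_eq, sub_zero] at this
    exact (le_abs_self _).trans_lt this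
  rw [Real.dist_eq, show T + k₀ + k = T + (k₀ + k) by ring]
  linarith

open Finset in
set_option maxHeartbeats 1000000 in
lemma fc_all_converge (n : ℕ) (hn : 0 < n) (δ η : ℝ) (hδ0 : 0 < δ) (hδ1 : δ < 1)
    (hη : 0 < η) (x0 : Fin n → ℝ) (i : Fin n) :
    ∃ L : ℝ, Tendsto (fun t => fcTraj n δ η x0 t i) atTop (nhds L) := by
  classical
  set x : ℕ → Fin n → ℝ := fcTraj n δ η x0 with hx
  set a : ℕ → ℝ := fun t => cliqueAvg n (x t) with ha
  set q : ℕ → Fin n → ℝ := fun t j => if |x t j - a t| ≤ η then x t j - a t else 0 with hq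
  set D : ℕ → ℝ := fun t => ∑ j, q t j with hD
  set g : ℕ → ℝ := fun t => ∑ j, (q t j) ^ 2 with hg
  set V : ℕ → ℝ := fun t => ∑ j, (x t j - a t) ^ 2 with hV
  have hn' : (n : ℝ) ≠ 0 := Nat.cast_ne_zero.2 hn.ne'
  have hnpos : (0 : ℝ) < n := Nat.cast_pos.2 hn
  -- step recursion
  have L0 : ∀ t j, x (t + 1) j = x t j - δ * q t j := by
    intro t j
    have e1 : x (t + 1) j =
        if |x t j - a t| ≤ η then (1 - δ) * x t j + δ * a t else x t j := by
      rw [hx]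
      simp only [fcTraj]
      rfl
    rw [e1]
    simp only [hq]
    split_ifs with h
    · ring
    · ring
  have hDt : ∀ t, (∑ j, q t j) = D t := fun t => rfl
  have hgt : ∀ t, (∑ j, (q t j) ^ 2) = g t := fun t => rfl
  have hVt : ∀ t, (∑ j, (x t j - a t) ^ 2) = V t := fun t => rfl
  have hat : ∀ t, a t = (∑ j, x t j) / n := fun t => rfl
  have L3 : ∀ t, ∑ j, (x t j - a t) = 0 := by
    intro t
    rw [Finset.sum_sub_distrib, hat, Finset.sum_const, card_univ, Fintype.card_fin,
      nsmul_eq_mul]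
    field_simp
    ring
  have L2 : ∀ t, a (t + 1) = a t - δ / n * D t := by
    intro t
    have h1 : ∑ j, x (t + 1) j = (∑ j, x t j) - δ * D t := by
      calc ∑ j, x (t + 1) j = ∑ j, (x t j - δ * q t j) :=
            Finset.sum_congr rfl fun j _ => L0 t j
        _ = (∑ j, x t j) - δ * D t := by
            rw [Finset.sum_sub_distrib, ← Finset.mul_sum, hDt]
    rw [hat, hat, h1]
    field_simp
    try ring
  have L4 : ∀ t j, x (t + 1) j - a (t + 1) = (x t j - a t) - δ * q t j + δ / n * D t := by
    intro t j
    rw [L0, L2]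
    ring
  have L5 : ∀ t, V (t + 1) = V t - (δ * (2 - δ)) * g t - (δ ^ 2 / n) * (D t) ^ 2 := by
    intro t
    have hc : ∀ j, q t j * (x t j - a t) = (q t j) ^ 2 := by
      intro j
      simp only [hq]
      split_ifs with h
      · ring
      · simp
    have hpt : ∀ j, (x (t + 1) j - a (t + 1)) ^ 2 =
        (x t j - a t) ^ 2 + (δ ^ 2 - 2 * δ) * (q t j) ^ 2 + (δ / n * D t) ^ 2
          + 2 * (δ / n * D t) * (x t j - a t) - 2 * δ * (δ / n * D t) * (q t j) := by
      intro j
      rw [L4 t j]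
      linear_combination (-2 * δ) * hc j
    calc V (t + 1) = ∑ j, ((x t j - a t) ^ 2 + (δ ^ 2 - 2 * δ) * (q t j) ^ 2
          + (δ / n * D t) ^ 2 + 2 * (δ / n * D t) * (x t j - a t)
          - 2 * δ * (δ / n * D t) * (q t j)) := by
          rw [← hVt (t + 1)]
          exact Finset.sum_congr rfl fun j _ => hpt j
      _ = (∑ j, (x t j - a t) ^ 2) + (δ ^ 2 - 2 * δ) * (∑ j, (q t j) ^ 2)
          + (n : ℝ) * (δ / n * D t) ^ 2 + 2 * (δ / n * D t) * (∑ j, (x t j - a t))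
          - 2 * δ * (δ / n * D t) * (∑ j, q t j) := by
          rw [Finset.sum_sub_distrib, Finset.sum_add_distrib, Finset.sum_add_distrib,
            Finset.sum_add_distrib, ← Finset.mul_sum, ← Finset.mul_sum, ← Finset.mul_sum,
            Finset.sum_const, card_univ, Fintype.card_fin, nsmul_eq_mul]
      _ = V t - (δ * (2 - δ)) * g t - (δ ^ 2 / n) * (D t) ^ 2 := by
          rw [L3 t, hVt, hgt, hDt]
          field_simp
          ring
  have hg0 : ∀ t, 0 ≤ g t := fun t => Finset.sum_nonneg fun j _ => sq_nonneg _
  have hV0 : ∀ t, 0 ≤ V t := fun t => Finset.sum_nonneg fun j _ => sq_nonneg _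
  have hn1 : (1 : ℝ) ≤ n := Nat.one_le_cast.2 hn
  have L6 : ∀ t, V (t + 1) ≤ V t - δ * g t := by
    intro t
    have h1 : 0 ≤ δ * (1 - δ) * g t :=
      mul_nonneg (mul_nonneg hδ0.le (by linarith)) (hg0 t)
    have h2 : 0 ≤ δ ^ 2 / n * (D t) ^ 2 := by positivity
    nlinarith [L5 t]
  have hVanti : Antitone V := antitone_nat_of_succ_le fun t => by
    nlinarith [L6 t, mul_nonneg hδ0.le (hg0 t)]
  have hVlim : Tendsto V atTop (nhds (⨅ t, V t)) :=
    tendsto_atTop_ciInf hVanti ⟨0, by rintro v ⟨t, rfl⟩; exact hV0 t⟩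
  have hVlim' : Tendsto (fun t => V (t + 1)) atTop (nhds (⨅ t, V t)) :=
    (tendsto_add_atTop_iff_nat 1).2 hVlim
  have hdiff : Tendsto (fun t => (V t - V (t + 1)) / δ) atTop (nhds 0) := by
    have := (hVlim.sub hVlim').div_const δ
    simpa using this
  have hgto : Tendsto g atTop (nhds 0) := by
    refine tendsto_of_tendsto_of_tendsto_of_le_of_le tendsto_const_nhds hdiff hg0
      (fun t => ?_)
    rw [le_div_iff₀ hδ0]
    nlinarith [L6 t]
  obtain ⟨T, hT⟩ := eventually_atTop.1 (hgto.eventually_lt_const (show (0:ℝ) < (η/3)^2 by positivity))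
  have hDb : ∀ t, (δ / n * D t) ^ 2 ≤ g t := by
    intro t
    have hCS : (D t) ^ 2 ≤ (n : ℝ) * g t := by
      rw [← hDt, ← hgt]
      have := sq_sum_le_card_mul_sum_sq (s := univ) (f := q t)
      simpa [card_univ] using this
    have h1 : (δ / n * D t) ^ 2 = δ ^ 2 / n ^ 2 * (D t) ^ 2 := by ring
    have h2 : δ ^ 2 / n ^ 2 * (D t) ^ 2 ≤ δ ^ 2 / n ^ 2 * ((n:ℝ) * g t) :=
      mul_le_mul_of_nonneg_left hCS (by positivity)
    have h3 : δ ^ 2 / n ^ 2 * ((n:ℝ) * g t) = (δ ^ 2 / n) * g t := by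
      field_simp
    have h4 : (δ ^ 2 / n) * g t ≤ 1 * g t := by
      refine mul_le_mul_of_nonneg_right ?_ (hg0 t)
      rw [div_le_one hnpos]
      nlinarith
    linarith
  set A : ℕ → Finset (Fin n) := fun t => univ.filter (fun j => |x t j - a t| ≤ η) with hA
  have hmem : ∀ t j, j ∈ A t ↔ |x t j - a t| ≤ η := by
    intro t j
    simp [hA]
  have hqmem : ∀ t j, j ∈ A t → q t j = x t j - a t := by
    intro t j hj
    simp only [hq]
    rw [if_pos ((hmem t j).1 hj)]
  have hqnot : ∀ t j, j ∉ A t → q t j = 0 := by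
    intro t j hj
    simp only [hq]
    rw [if_neg (fun h => hj ((hmem t j).2 h))]
  -- after time T the active set can only shrink
  have hsub : ∀ t, T ≤ t → A (t + 1) ⊆ A t := by
    intro t ht j hj1
    by_contra hj0
    have hq0 : q t j = 0 := hqnot t j hj0
    have h1 : η < |x t j - a t| := lt_of_not_ge (fun h => hj0 ((hmem t j).2 h))
    have hc : |δ / n * D t| < η / 3 := by
      nlinarith [sq_abs (δ / n * D t), hDb t, hT t ht, abs_nonneg (δ / n * D t), hη]
    have heq : x t j - a t = (x (t + 1) j - a (t + 1)) - δ / n * D t := by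
      rw [L4 t j, hq0]
      ring
    have h2 : |x t j - a t| ≤ |x (t + 1) j - a (t + 1)| + |δ / n * D t| := by
      rw [heq]
      exact abs_sub _ _
    have h3 : 2 * η / 3 < |x (t + 1) j - a (t + 1)| := by linarith
    have h4 : (q (t + 1) j) ^ 2 ≤ g (t + 1) := by
      rw [← hgt]
      exact Finset.single_le_sum (fun k _ => sq_nonneg (q (t + 1) k)) (mem_univ j)
    rw [hqmem (t + 1) j hj1] at h4
    have h5 := hT (t + 1) (by omega)
    nlinarith [sq_abs (x (t + 1) j - a (t + 1)), abs_nonneg (x (t + 1) j - a (t + 1))]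
  have hchain : ∀ s t, T ≤ s → s ≤ t → A t ⊆ A s := by
    intro s t hs hst
    induction t, hst using Nat.le_induction with
    | base => exact subset_rfl
    | succ t ht ih => exact (hsub t (hs.trans ht)).trans ih
  -- the active set stabilizes
  obtain ⟨k₀, hk₀⟩ : ∃ k₀, ∀ k, k₀ ≤ k → A (T + k) = A (T + k₀) := by
    have hne : (Set.range fun k => (A (T + k)).card).Nonempty := ⟨_, ⟨0, rfl⟩⟩
    obtain ⟨k₀, hk₀⟩ := Nat.sInf_mem hne
    refine ⟨k₀, fun k hk => ?_⟩
    refine Finset.eq_of_subset_of_card_le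
      (hchain (T + k₀) (T + k) (Nat.le_add_right _ _) (by omega)) ?_
    calc #(A (T + k₀)) = sInf (Set.range fun k => #(A (T + k))) := hk₀
      _ ≤ #(A (T + k)) := Nat.sInf_le ⟨k, rfl⟩
  set T' : ℕ := T + k₀ with hT'
  set S : Finset (Fin n) := A T' with hS
  have hAconst : ∀ t, T' ≤ t → A t = S := by
    intro t ht
    obtain ⟨k, rfl⟩ := Nat.exists_eq_add_of_le ht
    rw [hS, hT']
    rw [show T + k₀ + k = T + (k₀ + k) by ring]
    exact hk₀ (k₀ + k) (Nat.le_add_right _ _)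
  have hfreeze : ∀ t, T' ≤ t → ∀ j, j ∉ S → x t j = x T' j := by
    intro t ht
    induction t, ht using Nat.le_induction with
    | base => intro j _; rfl
    | succ t ht ih =>
      intro j hj
      rw [L0, hqnot t j (by rw [hAconst t ht]; exact hj), mul_zero, sub_zero]
      exact ih j hj
  set F : ℝ := ∑ j ∈ Sᶜ, x T' j with hF
  have hDform : ∀ t, T' ≤ t → D t = ((n : ℝ) - S.card) * a t - F := by
    intro t ht
    have e1 : D t = ∑ j ∈ A t, (x t j - a t) := by
      rw [← hDt]
      rw [hq, hA]
      exact (Finset.sum_filter _ _).symm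
    rw [e1, hAconst t ht]
    have e2 : ∑ j ∈ S, (x t j - a t) = (∑ j ∈ S, x t j) - (S.card : ℝ) * a t := by
      rw [Finset.sum_sub_distrib, Finset.sum_const, nsmul_eq_mul]
    have e3 : (∑ j ∈ S, x t j) + (∑ j ∈ Sᶜ, x t j) = ∑ j, x t j :=
      Finset.sum_add_sum_compl S _
    have e4 : ∑ j ∈ Sᶜ, x t j = F := by
      rw [hF]
      exact Finset.sum_congr rfl fun j hj => hfreeze t ht j (Finset.mem_compl.1 hj)
    have e5 : ∑ j, x t j = (n : ℝ) * a t := by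
      rw [hat]
      field_simp
    rw [e2]
    have : (∑ j ∈ S, x t j) = (n : ℝ) * a t - F := by
      rw [← e5, ← e3, e4]
      ring
    rw [this]
    ring
  set ρ : ℝ := 1 - δ * ((n : ℝ) - S.card) / n with hρ
  have hrec_a : ∀ t, T' ≤ t → a (t + 1) = ρ * a t + δ / n * F := by
    intro t ht
    rw [L2, hDform t ht, hρ]
    field_simp
    ring
  have hscard : (S.card : ℝ) ≤ n := by
    have h : S.card ≤ Fintype.card (Fin n) := Finset.card_le_univ S
    rw [Fintype.card_fin] at h
    exact_mod_cast h
  have haconv : ∃ La : ℝ, Tendsto a atTop (nhds La) := by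
    by_cases hcase : S.card = n
    · -- all nodes active: average is constant after T'
      have hSuniv : S = univ := by
        rw [← Finset.card_eq_iff_eq_univ]
        rw [Fintype.card_fin]
        exact hcase
      have hF0 : F = 0 := by
        rw [hF, hSuniv, Finset.compl_univ, Finset.sum_empty]
      have hρ1 : ρ = 1 := by
        rw [hρ, hcase]
        field_simp
        ring
      have hconst : ∀ t, T' ≤ t → a t = a T' := by
        intro t ht
        induction t, ht using Nat.le_induction with
        | base => rfl
        | succ t ht ih =>
          rw [hrec_a t ht, hρ1, hF0, ih]
          ring
      exact ⟨a T', tendsto_atTop_of_eventually_const hconst⟩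
    · have hlt : (S.card : ℝ) < n := lt_of_le_of_ne hscard (by exact_mod_cast hcase)
      have hρabs : |ρ| < 1 := by
        have hc0 : (0:ℝ) ≤ (S.card : ℝ) := Nat.cast_nonneg _
        have key : δ * ((n : ℝ) - S.card) < n := by
          have h1 : δ * ((n : ℝ) - S.card) < 1 * ((n : ℝ) - S.card) :=
            mul_lt_mul_of_pos_right hδ1 (sub_pos.2 hlt)
          linarith
        have key2 : δ * ((n : ℝ) - S.card) / n < 1 := (div_lt_one hnpos).2 key
        have key3 : 0 < δ * ((n : ℝ) - S.card) / n :=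
          div_pos (mul_pos hδ0 (sub_pos.2 hlt)) hnpos
        rw [abs_lt, hρ]
        constructor
        · linarith
        · linarith
      have haux := aux_affine ρ (δ / n * F) hρabs (fun k => a (T' + k))
        (fun k => hrec_a (T' + k) (Nat.le_add_right _ _))
      refine ⟨δ / n * F / (1 - ρ), ?_⟩
      have := (tendsto_add_atTop_iff_nat T').1
        (haux.congr fun k => congrArg a (Nat.add_comm T' k))
      exact this
  obtain ⟨La, hLa⟩ := haconv
  by_cases hiS : i ∈ S
  · -- active forever: exponential smoothing towards the average
    have hrec_x : ∀ k : ℕ, x (T' + (k + 1)) i = (1 - δ) * x (T' + k) i + δ * a (T' + k) := by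
      intro k
      have : x (T' + k + 1) i = x (T' + k) i - δ * q (T' + k) i := L0 _ i
      rw [show T' + (k + 1) = T' + k + 1 from rfl, this,
        hqmem (T' + k) i (by rw [hAconst (T' + k) (Nat.le_add_right _ _)]; exact hiS)]
      ring
    have hva : Tendsto (fun k => a (T' + k)) atTop (nhds La) := by
      have := (tendsto_add_atTop_iff_nat T').2 hLa
      exact this.congr fun k => congrArg a (Nat.add_comm k T')
    have hconv := aux_smoothing δ hδ0 hδ1 (fun k => x (T' + k) i) (fun k => a (T' + k))
      La hva hrec_x
    have hconv' : Tendsto (fun k => x (k + T') i) atTop (nhds La) :=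
      hconv.congr fun k => (congrArg (fun u => x u i) (Nat.add_comm T' k) :
        x (T' + k) i = x (k + T') i)
    exact ⟨La, (tendsto_add_atTop_iff_nat T').1 hconv'⟩
  · -- frozen forever
    refine ⟨x T' i, tendsto_atTop_of_eventually_const (fun t (ht : T' ≤ t) => ?_)⟩
    exact hfreeze t ht i hiS

/-- for `m = n`, almost every initial vector in `[0,1]^n` (w.r.t. `n`-dimensional
Lebesgue measure) leads all node states to converge to finite limits. -/
theorem stmt0 (n : ℕ) (hn : 2 ≤ n) (δ η : ℝ) (hδ0 : 0 < δ) (hδ1 : δ < 1) (hη : 0 < η) :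
    ∀ᵐ x0 ∂((volume : Measure (Fin n → ℝ)).restrict (Set.univ.pi fun _ => Set.Icc (0:ℝ) 1)),
      ∀ i : Fin n, ∃ L : ℝ, Tendsto (fun t => fcTraj n δ η x0 t i) atTop (nhds L) := by
  exact ae_of_all _ fun x0 i => fc_all_converge n (by omega) δ η hδ0 hδ1 hη x0 i
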